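/- For a 3-form φ on a 6-dimensional real vector space V, the kernel ker φ = {v ∈ V : ι_v φ = 0} has dimension 0, 1, 3, or 6. -/

import Mathlib

section swaps
variable {V : Type*} [AddCommGroup V] [Module ℝ V] (f : AlternatingMap ℝ V ℝ (Fin 3))

lemma tf_s01 (x y z : V) : f ![y, x, z] = - f ![x, y, z] := by
  have h := f.map_swap (v := ![x, y, z]) (i := (0 : Fin 3)) (j := 1) (by decide)
  rw [show (![x,y,z] ∘ Equiv.swap (0:Fin 3) 1) = ![y,x,z] by
    funext i; fin_cases i <;> simp [Equiv.swap_apply_def]] at h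
  exact h

lemma tf_s02 (x y z : V) : f ![z, y, x] = - f ![x, y, z] := by
  have h := f.map_swap (v := ![x, y, z]) (i := (0 : Fin 3)) (j := 2) (by decide)
  rw [show (![x,y,z] ∘ Equiv.swap (0:Fin 3) 2) = ![z,y,x] by
    funext i; fin_cases i <;> simp [Equiv.swap_apply_def]] at h
  exact h

lemma tf_s12 (x y z : V) : f ![x, z, y] = - f ![x, y, z] := by
  have h := f.map_swap (v := ![x, y, z]) (i := (1 : Fin 3)) (j := 2) (by decide)
  rw [show (![x,y,z] ∘ Equiv.swap (1:Fin 3) 2) = ![x,z,y] by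
    funext i; fin_cases i <;> simp [Equiv.swap_apply_def]] at h
  exact h

lemma tf_cyc (x y z : V) : f ![y, z, x] = f ![x, y, z] := by
  rw [show f ![y,z,x] = - f ![z,y,x] from tf_s01 f z y x, tf_s02 f x y z]; ring

lemma tf_r01 (x z : V) : f ![x, x, z] = 0 :=
  f.map_eq_zero_of_eq _ (by simp) (by decide : (0:Fin 3) ≠ 1)

lemma tf_r02 (x y : V) : f ![x, y, x] = 0 :=
  f.map_eq_zero_of_eq _ (by simp) (by decide : (0:Fin 3) ≠ 2)

lemma tf_r12 (x y : V) : f ![y, x, x] = 0 :=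
  f.map_eq_zero_of_eq _ (by simp) (by decide : (1:Fin 3) ≠ 2)

lemma tf_curry (x y z : V) : f.curryLeft x ![y, z] = f ![x, y, z] := by
  simp [AlternatingMap.curryLeft_apply_apply]
end swaps

lemma dim4_ker_ne_bot (W : Type*) [AddCommGroup W] [Module ℝ W] [FiniteDimensional ℝ W]
    (hW : Module.finrank ℝ W = 4) (ψ : AlternatingMap ℝ W ℝ (Fin 3)) :
    LinearMap.ker ψ.curryLeft ≠ ⊥ := by
  intro hbot
  set e := Module.finBasisOfFinrankEq ℝ W hW with he
  set p := ψ ![e 0, e 1, e 2] with hp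
  set q := ψ ![e 0, e 1, e 3] with hq
  set r := ψ ![e 0, e 2, e 3] with hr
  set s := ψ ![e 1, e 2, e 3] with hs
  set X : W := s • e 0 - r • e 1 + q • e 2 - p • e 3 with hX
  -- value table
  have v120 : ψ ![e 1, e 2, e 0] = p := tf_cyc ψ (e 0) (e 1) (e 2)
  have v201 : ψ ![e 2, e 0, e 1] = p := (tf_cyc ψ (e 2) (e 0) (e 1)).symm
  have v102 : ψ ![e 1, e 0, e 2] = -p := tf_s01 ψ (e 0) (e 1) (e 2)
  have v021 : ψ ![e 0, e 2, e 1] = -p := tf_s12 ψ (e 0) (e 1) (e 2)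
  have v210 : ψ ![e 2, e 1, e 0] = -p := tf_s02 ψ (e 0) (e 1) (e 2)
  have v130 : ψ ![e 1, e 3, e 0] = q := tf_cyc ψ (e 0) (e 1) (e 3)
  have v301 : ψ ![e 3, e 0, e 1] = q := (tf_cyc ψ (e 3) (e 0) (e 1)).symm
  have v103 : ψ ![e 1, e 0, e 3] = -q := tf_s01 ψ (e 0) (e 1) (e 3)
  have v031 : ψ ![e 0, e 3, e 1] = -q := tf_s12 ψ (e 0) (e 1) (e 3)
  have v310 : ψ ![e 3, e 1, e 0] = -q := tf_s02 ψ (e 0) (e 1) (e 3)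
  have v230 : ψ ![e 2, e 3, e 0] = r := tf_cyc ψ (e 0) (e 2) (e 3)
  have v302 : ψ ![e 3, e 0, e 2] = r := (tf_cyc ψ (e 3) (e 0) (e 2)).symm
  have v203 : ψ ![e 2, e 0, e 3] = -r := tf_s01 ψ (e 0) (e 2) (e 3)
  have v032 : ψ ![e 0, e 3, e 2] = -r := tf_s12 ψ (e 0) (e 2) (e 3)
  have v320 : ψ ![e 3, e 2, e 0] = -r := tf_s02 ψ (e 0) (e 2) (e 3)
  have v231 : ψ ![e 2, e 3, e 1] = s := tf_cyc ψ (e 1) (e 2) (e 3)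
  have v312 : ψ ![e 3, e 1, e 2] = s := (tf_cyc ψ (e 3) (e 1) (e 2)).symm
  have v213 : ψ ![e 2, e 1, e 3] = -s := tf_s01 ψ (e 1) (e 2) (e 3)
  have v132 : ψ ![e 1, e 3, e 2] = -s := tf_s12 ψ (e 1) (e 2) (e 3)
  have v321 : ψ ![e 3, e 2, e 1] = -s := tf_s02 ψ (e 1) (e 2) (e 3)
  have expand : ∀ j k : Fin 4, ψ.curryLeft X ![e j, e k]
      = s * ψ ![e 0, e j, e k] - r * ψ ![e 1, e j, e k] + q * ψ ![e 2, e j, e k]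
        - p * ψ ![e 3, e j, e k] := by
    intro j k
    rw [hX, map_sub, map_add, map_sub, map_smul, map_smul, map_smul, map_smul]
    simp [tf_curry]
  have key : ψ.curryLeft X = 0 := by
    refine Module.Basis.ext_alternating e (fun v hv => ?_)
    have hne : v 0 ≠ v 1 := fun h => absurd (hv h) (by decide)
    have hcomp : (fun i => e (v i)) = ![e (v 0), e (v 1)] := by
      funext i; fin_cases i <;> rfl
    rw [hcomp, AlternatingMap.zero_apply, expand]
    revert hne
    generalize v 0 = j
    generalize v 1 = k
    intro hne
    fin_cases j <;> fin_cases k <;>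
      first
      | exact absurd rfl hne
      | (simp only [Fin.isValue, Fin.reduceFinMk, v120, v201, v102, v021, v210, v130, v301, v103, v031, v310,
          v230, v302, v203, v032, v320, v231, v312, v213, v132, v321,
          tf_r01, tf_r02, tf_r12, ← hp, ← hq, ← hr, ← hs]; ring)
  have hXmem : X ∈ LinearMap.ker ψ.curryLeft := key
  rw [hbot, Submodule.mem_bot] at hXmem
  -- X = 0, so all coefficients vanish
  have hcoef : s = 0 ∧ r = 0 ∧ q = 0 ∧ p = 0 := by
    have hli := e.linearIndependent
    have : s • e 0 + (-r) • e 1 + q • e 2 + (-p) • e 3 = 0 := by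
      rw [← hXmem, hX]; module
    have h4 := Fintype.linearIndependent_iff.mp hli (![s, -r, q, -p]) ?_
    · refine ⟨h4 0, ?_, h4 2, ?_⟩
      · have := h4 1; simpa using neg_eq_zero.mp this
      · have := h4 3; simpa using neg_eq_zero.mp this
    · rw [show (∑ i, ![s, -r, q, -p] i • e i) = s • e 0 + (-r) • e 1 + q • e 2 + (-p) • e 3 by
        simp [Fin.sum_univ_four]]
      exact this
  obtain ⟨hs0, hr0, hq0, hp0⟩ := hcoef
  -- then e 0 is in the kernel, contradiction with e 0 ≠ 0
  have key0 : ψ.curryLeft (e 0) = 0 := by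
    refine Module.Basis.ext_alternating e (fun v hv => ?_)
    have hne : v 0 ≠ v 1 := fun h => absurd (hv h) (by decide)
    have hcomp : (fun i => e (v i)) = ![e (v 0), e (v 1)] := by
      funext i; fin_cases i <;> rfl
    rw [hcomp, AlternatingMap.zero_apply, tf_curry]
    revert hne
    generalize v 0 = j
    generalize v 1 = k
    intro hne
    fin_cases j <;> fin_cases k <;>
      first
      | exact absurd rfl hne
      | (simp only [Fin.isValue, Fin.reduceFinMk, v120, v201, v102, v021, v210, v130, v301, v103, v031, v310,
          v230, v302, v203, v032, v320, v231, v312, v213, v132, v321,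
          tf_r01, tf_r02, tf_r12, ← hp, ← hq, ← hr, ← hs, hs0, hr0, hq0, hp0]; try ring)
  have : e 0 ∈ LinearMap.ker ψ.curryLeft := key0
  rw [hbot, Submodule.mem_bot] at this
  exact e.ne_zero 0 this

/-- For a 3-form φ on a 6-dimensional real vector space V, the kernel
ker φ = {v : ι_v φ = 0} (the kernel of the linear map v ↦ ι_v φ) has dimension
0, 1, 3 or 6. -/
theorem three_form_kernel_dim (V : Type*) [AddCommGroup V] [Module ℝ V]
    [FiniteDimensional ℝ V] (hV : Module.finrank ℝ V = 6)
    (φ : AlternatingMap ℝ V ℝ (Fin 3)) :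
    Module.finrank ℝ (LinearMap.ker (AlternatingMap.curryLeft φ)) ∈ ({0, 1, 3, 6} : Set ℕ) := by
  classical
  set K := LinearMap.ker φ.curryLeft with hK
  obtain ⟨W, hWc⟩ := Submodule.exists_isCompl K
  set ψ := φ.compLinearMap W.subtype with hψdef
  -- the restriction of φ to a complement of K has trivial kernel
  have hker : LinearMap.ker ψ.curryLeft = ⊥ := by
    rw [eq_bot_iff]
    intro w hw
    rw [LinearMap.mem_ker] at hw
    rw [Submodule.mem_bot]
    have hmemK : (w : V) ∈ K := by
      rw [hK, LinearMap.mem_ker]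
      refine AlternatingMap.ext fun v => ?_
      have hv : v = ![v 0, v 1] := by funext i; fin_cases i <;> rfl
      rw [hv, AlternatingMap.zero_apply, tf_curry]
      obtain ⟨k0, w0, hk0, hw0, hsum0⟩ :=
        Submodule.codisjoint_iff_exists_add_eq.mp hWc.codisjoint (v 0)
      obtain ⟨k1, w1, hk1, hw1, hsum1⟩ :=
        Submodule.codisjoint_iff_exists_add_eq.mp hWc.codisjoint (v 1)
      have hk0' : φ.curryLeft k0 = 0 := by rw [hK] at hk0; exact LinearMap.mem_ker.mp hk0
      have hk1' : φ.curryLeft k1 = 0 := by rw [hK] at hk1; exact LinearMap.mem_ker.mp hk1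
      have h0 : φ.curryLeft (v 0) = φ.curryLeft w0 := by
        rw [← hsum0, map_add, hk0', zero_add]
      have h1 : φ.curryLeft (v 1) = φ.curryLeft w1 := by
        rw [← hsum1, map_add, hk1', zero_add]
      have hlast : φ ![(w : V), w0, w1] = 0 := by
        have : φ ![(w : V), w0, w1] = ψ ![w, ⟨w0, hw0⟩, ⟨w1, hw1⟩] := by
          rw [hψdef, AlternatingMap.compLinearMap_apply]
          congr 1
          funext i; fin_cases i <;> rfl
        rw [this, ← tf_curry, hw, AlternatingMap.zero_apply]
      calc φ ![(w : V), v 0, v 1]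
          = -φ ![v 0, (w : V), v 1] := tf_s01 φ (v 0) w (v 1)
        _ = -φ ![w0, (w : V), v 1] := by rw [← tf_curry φ (v 0), ← tf_curry φ w0, h0]
        _ = φ ![(w : V), w0, v 1] := by rw [tf_s01 φ (w : V) w0 (v 1)]; ring
        _ = -φ ![v 1, w0, (w : V)] := by rw [tf_s02 φ (w : V) w0 (v 1)]; ring
        _ = -φ ![w1, w0, (w : V)] := by rw [← tf_curry φ (v 1), ← tf_curry φ w1, h1]
        _ = φ ![(w : V), w0, w1] := by rw [tf_s02 φ (w : V) w0 w1]; ring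
        _ = 0 := hlast
    have : (w : V) ∈ K ⊓ W := ⟨hmemK, w.2⟩
    rw [hWc.disjoint.eq_bot, Submodule.mem_bot] at this
    exact Subtype.ext this
  -- dimension count
  have hdim : Module.finrank ℝ K + Module.finrank ℝ W = 6 := by
    rw [Submodule.finrank_add_eq_of_isCompl hWc, hV]
  have hsmall : Module.finrank ℝ W < 3 → Module.finrank ℝ W = 0 := by
    intro h3
    have hψ0 : ψ = 0 := by
      refine AlternatingMap.ext fun v => ?_
      refine (ψ.map_linearDependent v ?_).trans rfl
      intro hli
      have := hli.fintype_card_le_finrank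
      simp at this
      omega
    rw [finrank_zero_iff_forall_zero]
    intro x
    have hx : x ∈ LinearMap.ker ψ.curryLeft := by
      rw [LinearMap.mem_ker, hψ0]; rfl
    rw [hker, Submodule.mem_bot] at hx
    exact hx
  have hne4 : Module.finrank ℝ W ≠ 4 := fun h4 => dim4_ker_ne_bot W h4 ψ hker
  simp only [Set.mem_insert_iff, Set.mem_singleton_iff]
  rcases Nat.lt_or_ge (Module.finrank ℝ W) 3 with h | h
  · have := hsmall h; omega
  · omega
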